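/- Let m ≥ 3 and ε ∈ 𝔽₂, and let B^ε be the collection of all 4-element subsets S of V^ε = {v ∈ 𝔽₂^{2m} : θ₀(v) = ε} such that Σ_{v∈S} v = 0 in 𝔽₂^{2m}. Then: (i) any two distinct members of B^ε intersect in at most 2 elements; and (ii) for every pair of distinct a, b ∈ V^ε, the number of members of B^ε containing both a and b is exactly 2^{m−2}·(2^{m−1} + (−1)^ε) − 1, where (−1)^ε means +1 if ε = 0 and −1 if ε = 1. (Hence (V^ε, B^ε) is a supersimple 2-(2^{m−1}(2^m+(−1)^ε), 4, 2^{m−2}(2^{m−1}+(−1)^ε)−1) design.) -/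

import Mathlib

open Matrix

/-- Row vectors in `𝔽₂^{2m}`, with coordinates indexed by `Fin m ⊕ Fin m`
(the first block and the second block of `m` coordinates). -/
abbrev Vm (m : ℕ) := (Fin m ⊕ Fin m) → ZMod 2

/-- The block matrix `e = (0 Iₘ; 0 0)`. -/
def eMat (m : ℕ) : Matrix (Fin m ⊕ Fin m) (Fin m ⊕ Fin m) (ZMod 2) :=
  Matrix.fromBlocks 0 1 0 0

/-- The block matrix `f = e + eᵀ = (0 Iₘ; Iₘ 0)`. -/
def fMat (m : ℕ) : Matrix (Fin m ⊕ Fin m) (Fin m ⊕ Fin m) (ZMod 2) :=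
  eMat m + (eMat m)ᵀ

/-- The alternating bilinear form `φ(u,v) = u f vᵀ`. -/
def phi (m : ℕ) (u v : Vm m) : ZMod 2 := u ⬝ᵥ (fMat m).mulVec v

/-- The quadratic form `θ₀(u) = u e uᵀ`. -/
def theta0 (m : ℕ) (u : Vm m) : ZMod 2 := u ⬝ᵥ (eMat m).mulVec u

/-- The quadratic form `θ_a(u) = θ₀(u) + φ(u,a)`. -/
def theta (m : ℕ) (a u : Vm m) : ZMod 2 := theta0 m u + phi m u a

/-- The transvection `t_c : u ↦ u + φ(u,c)·c`. -/
def tvec (m : ℕ) (c u : Vm m) : Vm m := u + phi m u c • c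

/-- The line set `B^ε`: 4-element subsets of `V^ε` summing to zero. -/
def Bset (m : ℕ) (ε : ZMod 2) : Set (Finset (Vm m)) :=
  {S | S.card = 4 ∧ (∀ v ∈ S, theta0 m v = ε) ∧ ∑ v ∈ S, v = 0}

open Finset

section Helpers

lemma z2 : ∀ z : ZMod 2, z + z = 0 := by decide
lemma zne : ∀ z w : ZMod 2, ¬ z = w ↔ z = w + 1 := by decide
lemma z3 : ∀ z w : ZMod 2, z + w = 0 ↔ z = w := by decide
lemma z4 : ∀ x y z : ZMod 2, x + (y + (z + (x + y + z))) = 0 := by decide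
lemma z5 : ∀ e t p : ZMod 2, e = e + t + p → p = t := by decide
lemma zcases : ∀ z : ZMod 2, z = 0 ∨ z = 1 := by decide

lemma theta0_eq (m : ℕ) (u : Vm m) :
    theta0 m u = ∑ i, u (Sum.inl i) * u (Sum.inr i) := by
  simp [theta0, eMat, dotProduct, Matrix.mulVec, Matrix.fromBlocks,
    Fintype.sum_sum_type, Matrix.one_apply, mul_ite]

lemma phi_eq (m : ℕ) (u v : Vm m) :
    phi m u v = ∑ i, (u (Sum.inl i) * v (Sum.inr i) + u (Sum.inr i) * v (Sum.inl i)) := by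
  simp [phi, fMat, eMat, dotProduct, Matrix.mulVec, Matrix.fromBlocks,
    Fintype.sum_sum_type, Matrix.one_apply, mul_ite, Finset.sum_add_distrib]

lemma theta0_add (m : ℕ) (u v : Vm m) :
    theta0 m (u + v) = theta0 m u + theta0 m v + phi m u v := by
  simp only [theta0_eq, phi_eq, Pi.add_apply, ← Finset.sum_add_distrib]
  exact Finset.sum_congr rfl fun i _ => by ring

lemma phi_self (m : ℕ) (u : Vm m) : phi m u u = 0 := by
  rw [phi_eq]
  exact Finset.sum_eq_zero fun i _ => by rw [mul_comm]; exact z2 _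

lemma phi_comm (m : ℕ) (u v : Vm m) : phi m u v = phi m v u := by
  simp only [phi_eq]
  exact Finset.sum_congr rfl fun i _ => by ring

lemma phi_add_left (m : ℕ) (u v w : Vm m) :
    phi m (u + v) w = phi m u w + phi m v w := by
  simp only [phi_eq, Pi.add_apply, ← Finset.sum_add_distrib]
  exact Finset.sum_congr rfl fun i _ => by ring

lemma phi_add_right (m : ℕ) (u v w : Vm m) :
    phi m u (v + w) = phi m u v + phi m u w := by
  rw [phi_comm, phi_add_left, phi_comm m v u, phi_comm m w u]

lemma pi_add_self {m : ℕ} (y : Vm m) : y + y = 0 := by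
  funext i; exact z2 _

lemma vadd_eq_zero {m : ℕ} (x y : Vm m) : x + y = 0 ↔ x = y := by
  constructor <;> intro h
  · funext i
    have := congrFun h i
    exact (z3 _ _).mp this
  · subst h; exact pi_add_self x

lemma half_card_filter {α : Type*} [Fintype α] [DecidableEq α]
    (P : α → Prop) [DecidablePred P] (L : α → ZMod 2) (t : α → α)
    (ht : Function.Involutive t) (hP : ∀ x, P x → P (t x))
    (hL : ∀ x, P x → L (t x) = L x + 1) (ε : ZMod 2) :
    2 * (univ.filter (fun x => P x ∧ L x = ε)).card = (univ.filter P).card := by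
  have hflip : ∀ z : ZMod 2, z + 1 + 1 = z := by decide
  have hbij : ∀ δ : ZMod 2, (univ.filter (fun x => P x ∧ L x = δ)).card
      = (univ.filter (fun x => P x ∧ L x = δ + 1)).card := by
    intro δ
    apply Finset.card_nbij' t t
    · intro x hx
      simp only [Finset.mem_coe, mem_filter, mem_univ, true_and] at hx ⊢
      exact ⟨hP x hx.1, by rw [hL x hx.1, hx.2]⟩
    · intro x hx
      simp only [Finset.mem_coe, mem_filter, mem_univ, true_and] at hx ⊢
      exact ⟨hP x hx.1, by rw [hL x hx.1, hx.2, hflip]⟩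
    · intro x _; exact ht x
    · intro x _; exact ht x
  have hsplit := Finset.card_filter_add_card_filter_not
    (s := univ.filter P) (p := fun x => L x = ε)
  rw [Finset.filter_filter, Finset.filter_filter] at hsplit
  have heq : (Finset.filter (fun x => P x ∧ ¬ L x = ε) univ)
      = (Finset.filter (fun x => P x ∧ L x = ε + 1) univ) := by
    apply Finset.filter_congr
    intro x _
    simp [zne (L x) ε]
  rw [heq, ← hbij ε] at hsplit
  omega

lemma dot_count (m : ℕ) (hm : 1 ≤ m) (x : Fin m → ZMod 2) (hx : x ≠ 0) (ε : ZMod 2) :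
    (univ.filter (fun y : Fin m → ZMod 2 => x ⬝ᵥ y = ε)).card = 2^(m-1) := by
  obtain ⟨j, hj⟩ : ∃ j, x j ≠ 0 := by
    by_contra h
    push_neg at h
    exact hx (funext fun j => h j)
  have hj1 : x j = 1 := by
    have := zne (x j) 0
    simpa using (this.mp hj)
  have hss : (Pi.single j 1 : Fin m → ZMod 2) + Pi.single j 1 = 0 := by
    funext i; exact z2 _
  have key := half_card_filter (fun _ => True) (fun y => x ⬝ᵥ y)
    (fun y => y + Pi.single j 1)
    (fun y => by simp [add_assoc, hss])
    (fun _ _ => trivial)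
    (fun y _ => by
      show x ⬝ᵥ (y + Pi.single j 1) = x ⬝ᵥ y + 1
      rw [dotProduct_add, dotProduct_single, hj1, one_mul]) ε
  simp only [true_and, Finset.filter_true_of_mem (fun _ _ => trivial)] at key
  have hcard : (univ : Finset (Fin m → ZMod 2)).card = 2^m := by
    rw [Finset.card_univ]
    simp [Fintype.card_fun]
  rw [hcard] at key
  have h2 : 2^m = 2 * 2^(m-1) := by
    rw [← pow_succ']
    congr 1
    omega
  omega

lemma Vcount (m : ℕ) (hm : 1 ≤ m) (ε : ZMod 2) :
    (univ.filter (fun v : Vm m => theta0 m v = ε)).card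
      = (if ε = 0 then 2^m else 0) + (2^m - 1) * 2^(m-1) := by
  classical
  set W := Fin m → ZMod 2
  let E : Vm m ≃ (W × W) := Equiv.sumArrowEquivProdArrow _ _ _
  have hth : ∀ v : Vm m, theta0 m v = (E v).1 ⬝ᵥ (E v).2 := by
    intro v
    rw [theta0_eq]
    rfl
  have h1 : (univ.filter (fun v : Vm m => theta0 m v = ε)).card
      = (univ.filter (fun p : W × W => p.1 ⬝ᵥ p.2 = ε)).card := by
    apply Finset.card_nbij' E E.symm
    · intro v hv
      simp only [Finset.mem_coe, mem_filter, mem_univ, true_and] at hv ⊢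
      rw [← hth]; exact hv
    · intro p hp
      simp only [Finset.mem_coe, mem_filter, mem_univ, true_and] at hp ⊢
      rw [hth, E.apply_symm_apply]; exact hp
    · intro v _; exact E.symm_apply_apply v
    · intro p _; exact E.apply_symm_apply p
  rw [h1]
  have h2 : (univ.filter (fun p : W × W => p.1 ⬝ᵥ p.2 = ε)).card
      = ∑ x : W, (univ.filter (fun y : W => x ⬝ᵥ y = ε)).card := by
    rw [Finset.card_filter]
    rw [Fintype.sum_prod_type]
    congr 1
    funext x
    rw [Finset.card_filter]
  rw [h2]
  rw [Finset.sum_eq_sum_sdiff_singleton_add (Finset.mem_univ (0 : W))]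
  have h3 : ∀ x ∈ univ \ {(0 : W)}, (univ.filter (fun y : W => x ⬝ᵥ y = ε)).card = 2^(m-1) := by
    intro x hx
    simp only [Finset.mem_sdiff, Finset.mem_singleton] at hx
    exact dot_count m hm x hx.2 ε
  rw [Finset.sum_congr rfl h3, Finset.sum_const, smul_eq_mul]
  have hW : Fintype.card W = 2^m := by
    show Fintype.card (Fin m → ZMod 2) = 2^m
    simp [Fintype.card_fun]
  have h4 : (univ \ {(0 : W)}).card = 2^m - 1 := by
    rw [Finset.sdiff_singleton_eq_erase, Finset.card_erase_of_mem (Finset.mem_univ _)]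
    rw [Finset.card_univ, hW]
  have h5 : (univ.filter (fun y : W => (0 : W) ⬝ᵥ y = ε)).card
      = if ε = 0 then 2^m else 0 := by
    by_cases hε : ε = 0
    · subst hε
      rw [if_pos rfl]
      have : (univ.filter (fun y : W => (0 : W) ⬝ᵥ y = 0)) = univ := by
        apply Finset.filter_true_of_mem
        intro y _
        simp [zero_dotProduct]
      rw [this, Finset.card_univ, hW]
    · rw [if_neg hε]
      rw [Finset.card_eq_zero, Finset.filter_eq_empty_iff]
      intro y _
      simp [zero_dotProduct]
      exact fun h => hε h.symm
  rw [h4, h5]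
  ring

lemma exists_phi_one {m : ℕ} (s : Vm m) (hs : s ≠ 0) : ∃ c : Vm m, phi m c s = 1 := by
  obtain ⟨j, hj⟩ : ∃ j, s j ≠ 0 := by
    by_contra h
    push_neg at h
    exact hs (funext fun j => h j)
  have hj1 : s j = 1 := by
    have := zne (s j) 0
    simpa using (this.mp hj)
  cases j with
  | inl i =>
    refine ⟨Pi.single (Sum.inr i) 1, ?_⟩
    rw [phi_eq]
    rw [Finset.sum_eq_single i]
    · simp [Pi.single_apply, hj1]
    · intro i' _ hne
      simp [Pi.single_apply, hne]
    · intro h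
      exact absurd (Finset.mem_univ i) h
  | inr i =>
    refine ⟨Pi.single (Sum.inl i) 1, ?_⟩
    rw [phi_eq]
    rw [Finset.sum_eq_single i]
    · simp [Pi.single_apply, hj1]
    · intro i' _ hne
      simp [Pi.single_apply, hne]
    · intro h
      exact absurd (Finset.mem_univ i) h

/-- A 4-set summing to zero is determined by any 3-subset. -/
lemma four_structure {m : ℕ} (S R : Finset (Vm m)) (hR : R ⊆ S) (hS4 : S.card = 4)
    (hR3 : R.card = 3) (hsum : ∑ v ∈ S, v = 0) : S = insert (∑ v ∈ R, v) R := by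
  have hd : (S \ R).card = 1 := by
    rw [Finset.card_sdiff_of_subset hR]
    omega
  obtain ⟨x, hx⟩ := Finset.card_eq_one.mp hd
  have hunion : S = R ∪ {x} := by
    rw [← hx, Finset.union_sdiff_of_subset hR]
  have hdisj : Disjoint R {x} := by
    rw [← hx]
    exact Finset.disjoint_sdiff
  have hsum2 : ∑ v ∈ R, v + x = 0 := by
    rw [hunion, Finset.sum_union hdisj, Finset.sum_singleton] at hsum
    exact hsum
  have hxval : x = ∑ v ∈ R, v := ((vadd_eq_zero _ _).mp hsum2).symm
  rw [hunion, hxval, Finset.union_comm, ← Finset.insert_eq]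

end Helpers

set_option maxHeartbeats 2000000 in
theorem stmt_0 (m : ℕ) (hm : 3 ≤ m) (ε : ZMod 2) :
    (∀ S T : Finset (Vm m), S ∈ Bset m ε → T ∈ Bset m ε → S ≠ T →
        (S ∩ T).card ≤ 2) ∧
    (∀ a b : Vm m, a ≠ b → theta0 m a = ε → theta0 m b = ε →
        {S : Finset (Vm m) | S ∈ Bset m ε ∧ a ∈ S ∧ b ∈ S}.ncard =
          (if ε = 0 then 2 ^ (m - 2) * (2 ^ (m - 1) + 1) - 1
           else 2 ^ (m - 2) * (2 ^ (m - 1) - 1) - 1)) := by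
  classical
  constructor
  · -- part (i)
    intro S T hS hT hne
    by_contra h
    push_neg at h
    obtain ⟨R, hRsub, hR3⟩ := Finset.exists_subset_card_eq h
    obtain ⟨hS4, hSθ, hSsum⟩ := hS
    obtain ⟨hT4, hTθ, hTsum⟩ := hT
    apply hne
    calc S = insert (∑ v ∈ R, v) R :=
            four_structure S R (hRsub.trans (Finset.inter_subset_left)) hS4 hR3 hSsum
      _ = T :=
            (four_structure T R (hRsub.trans (Finset.inter_subset_right)) hT4 hR3 hTsum).symm
  · -- part (ii)
    intro a b hab ha hb
    set s : Vm m := a + b with hsdef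
    have hs0 : s ≠ 0 := fun h => hab ((vadd_eq_zero a b).mp h)
    have hθs : theta0 m s = phi m a b := by
      rw [hsdef, theta0_add, ha, hb, z2, zero_add]
    -- the finsets
    set Sfin : Finset (Finset (Vm m)) :=
      univ.filter (fun S => S ∈ Bset m ε ∧ a ∈ S ∧ b ∈ S) with hSfin
    have hset : {S : Finset (Vm m) | S ∈ Bset m ε ∧ a ∈ S ∧ b ∈ S} = ↑Sfin := by
      ext S
      simp [hSfin]
    rw [hset, Set.ncard_coe_finset]
    set F : Vm m → Finset (Vm m) := fun c => insert a (insert b (insert c {a + b + c}))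
      with hF
    set Cfin : Finset (Vm m) :=
      univ.filter (fun c => (theta0 m c = ε ∧ phi m c s = theta0 m s) ∧ c ≠ a ∧ c ≠ b)
      with hCfin
    -- basic facts about elements of Cfin
    have hdval : ∀ c : Vm m, a + b + c = c + s := by
      intro c; rw [hsdef]; ring
    have hθd : ∀ c : Vm m, theta0 m (c + s) = theta0 m c + theta0 m s + phi m c s := by
      intro c; rw [theta0_add]
    -- F maps Cfin into Sfin
    have hmapsto : ∀ c ∈ Cfin, F c ∈ Sfin := by
      intro c hc
      simp only [hCfin, mem_filter, mem_univ, true_and] at hc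
      obtain ⟨⟨hθc, hφc⟩, hca, hcb⟩ := hc
      have hθd' : theta0 m (a + b + c) = ε := by
        rw [hdval, hθd, hθc, hφc]
        have : ∀ x t : ZMod 2, x + t + t = x := by decide
        exact this _ _
      have hda : a + b + c ≠ a := by
        intro h
        apply hcb
        have : b + c = 0 := by
          have := congrArg (fun x => a + x) h
          have h2 : a + (b + c) = a + 0 := by rw [← add_assoc]; rw [h]; ring
          exact add_left_cancel h2
        exact ((vadd_eq_zero b c).mp this).symm
      have hdb : a + b + c ≠ b := by
        intro h
        apply hca
        have h2 : b + (a + c) = b + 0 := by rw [show b + (a+c) = a+b+c by ring, h]; ring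
        exact ((vadd_eq_zero a c).mp (add_left_cancel h2)).symm
      have hdc : a + b + c ≠ c := by
        intro h
        apply hab
        have h2 : c + (a + b) = c + 0 := by rw [show c + (a+b) = a+b+c by ring, h]; ring
        exact (vadd_eq_zero a b).mp (add_left_cancel h2)
      simp only [hSfin, mem_filter, mem_univ, true_and]
      have hcard : (F c).card = 4 := by
        rw [hF]
        rw [Finset.card_insert_of_notMem, Finset.card_insert_of_notMem,
          Finset.card_insert_of_notMem, Finset.card_singleton]
        · simp [Ne.symm hdc]
        · simp [hcb.symm ∘ Eq.symm, Ne.symm hdb]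
          exact fun h => (hcb h.symm).elim
        · simp only [Finset.mem_insert, Finset.mem_singleton]
          push_neg
          exact ⟨hab, fun h => (hca h.symm).elim, fun h => (hda h.symm).elim⟩
      refine ⟨⟨hcard, ?_, ?_⟩, ?_, ?_⟩
      · intro v hv
        simp only [hF, Finset.mem_insert, Finset.mem_singleton] at hv
        rcases hv with rfl | rfl | rfl | rfl
        · exact ha
        · exact hb
        · exact hθc
        · exact hθd'
      · rw [hF]
        rw [Finset.sum_insert, Finset.sum_insert, Finset.sum_insert, Finset.sum_singleton]
        · funext i
          simp only [Pi.add_apply, Pi.zero_apply]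
          exact z4 (a i) (b i) (c i)
        · simp [Ne.symm hdc]
        · simp only [Finset.mem_insert, Finset.mem_singleton]
          push_neg
          exact ⟨fun h => (hcb h.symm).elim, fun h => (hdb h.symm).elim⟩
        · simp only [Finset.mem_insert, Finset.mem_singleton]
          push_neg
          exact ⟨hab, fun h => (hca h.symm).elim, fun h => (hda h.symm).elim⟩
      · simp [hF]
      · simp [hF]
    -- each fiber has exactly two elements
    have hfiber : ∀ S ∈ Sfin, (Cfin.filter (fun c => F c = S)).card = 2 := by
      intro S hS
      simp only [hSfin, mem_filter, mem_univ, true_and] at hS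
      obtain ⟨⟨hS4, hSθ, hSsum⟩, haS, hbS⟩ := hS
      have hfeq : Cfin.filter (fun c => F c = S) = S \ {a, b} := by
        ext c
        simp only [mem_filter, Finset.mem_sdiff, Finset.mem_insert, Finset.mem_singleton,
          hCfin, mem_univ, true_and]
        constructor
        · rintro ⟨⟨⟨hθc, hφc⟩, hca, hcb⟩, hFc⟩
          refine ⟨?_, ?_⟩
          · rw [← hFc, hF]
            simp
          · push_neg
            exact ⟨hca, hcb⟩
        · rintro ⟨hcS, hcab⟩
          push_neg at hcab
          obtain ⟨hca, hcb⟩ := hcab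
          have hR3 : ({a, b, c} : Finset (Vm m)).card = 3 := by
            rw [Finset.card_insert_of_notMem, Finset.card_insert_of_notMem,
              Finset.card_singleton]
            · simpa using Ne.symm hcb
            · simp only [Finset.mem_insert, Finset.mem_singleton]
              push_neg
              exact ⟨hab, Ne.symm hca⟩
          have hRsub : ({a, b, c} : Finset (Vm m)) ⊆ S := by
            intro x hx
            simp only [Finset.mem_insert, Finset.mem_singleton] at hx
            rcases hx with rfl | rfl | rfl
            · exact haS
            · exact hbS
            · exact hcS
          have hSeq : S = insert (∑ v ∈ ({a, b, c} : Finset (Vm m)), v) ({a, b, c} : Finset (Vm m)) :=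
            four_structure S _ hRsub hS4 hR3 hSsum
          have hsumR : ∑ v ∈ ({a, b, c} : Finset (Vm m)), v = a + b + c := by
            rw [Finset.sum_insert, Finset.sum_insert, Finset.sum_singleton, add_assoc]
            · simpa using Ne.symm hcb
            · simp only [Finset.mem_insert, Finset.mem_singleton]
              push_neg
              exact ⟨hab, Ne.symm hca⟩
          rw [hsumR] at hSeq
          have hFc : F c = S := by
            rw [hF, hSeq]
            ext x
            simp only [Finset.mem_insert, Finset.mem_singleton]
            tauto
          have hdS : a + b + c ∈ S := by
            rw [hSeq]
            simp
          have hθc : theta0 m c = ε := hSθ c hcS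
          have hθd2 : theta0 m (a + b + c) = ε := hSθ _ hdS
          have hφc : phi m c s = theta0 m s := by
            rw [hdval, hθd, hθc] at hθd2
            exact z5 ε (theta0 m s) (phi m c s) hθd2.symm
          exact ⟨⟨⟨hθc, hφc⟩, hca, hcb⟩, hFc⟩
      rw [hfeq]
      rw [Finset.card_sdiff_of_subset]
      · rw [hS4]
        rw [Finset.card_insert_of_notMem (by simpa using hab), Finset.card_singleton]
      · intro x hx
        simp only [Finset.mem_insert, Finset.mem_singleton] at hx
        rcases hx with rfl | rfl
        · exact haS
        · exact hbS
    -- double counting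
    have hdouble : Cfin.card = 2 * Sfin.card := by
      rw [Finset.card_eq_sum_card_fiberwise hmapsto]
      rw [Finset.sum_congr rfl hfiber, Finset.sum_const, smul_eq_mul, mul_comm]
    -- counting Cfin
    set Cbase : Finset (Vm m) :=
      univ.filter (fun c => theta0 m c = ε ∧ phi m c s = theta0 m s) with hCbase
    have haCb : a ∈ Cbase := by
      simp only [hCbase, mem_filter, mem_univ, true_and]
      refine ⟨ha, ?_⟩
      rw [hsdef, phi_add_right, phi_self, hθs]
      exact zero_add _
    have hbCb : b ∈ Cbase := by
      simp only [hCbase, mem_filter, mem_univ, true_and]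
      refine ⟨hb, ?_⟩
      rw [hsdef, phi_add_right, phi_self, hθs, phi_comm m b a]
      exact add_zero _
    have hCfin_eq : Cfin = Cbase \ {a, b} := by
      ext c
      simp only [hCfin, hCbase, mem_filter, mem_univ, true_and, Finset.mem_sdiff,
        Finset.mem_insert, Finset.mem_singleton]
      push_neg
      tauto
    have hC2 : Cfin.card + 2 = Cbase.card := by
      rw [hCfin_eq, Finset.card_sdiff_of_subset]
      · have hab2 : ({a, b} : Finset (Vm m)).card = 2 := by
          rw [Finset.card_insert_of_notMem (by simpa using hab), Finset.card_singleton]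
        have hle : ({a, b} : Finset (Vm m)).card ≤ Cbase.card := by
          apply Finset.card_le_card
          intro x hx
          simp only [Finset.mem_insert, Finset.mem_singleton] at hx
          rcases hx with rfl | rfl
          · exact haCb
          · exact hbCb
        omega
      · intro x hx
        simp only [Finset.mem_insert, Finset.mem_singleton] at hx
        rcases hx with rfl | rfl
        · exact haCb
        · exact hbCb
    -- the A set
    set Afin : Finset (Vm m) :=
      univ.filter (fun c => phi m c s = theta0 m s + 1 ∧ theta0 m c = ε) with hAfin
    have hpart : Cbase.card + Afin.card =
        (univ.filter (fun v : Vm m => theta0 m v = ε)).card := by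
      have hsplit := Finset.card_filter_add_card_filter_not
        (s := univ.filter (fun v : Vm m => theta0 m v = ε))
        (p := fun c => phi m c s = theta0 m s)
      rw [Finset.filter_filter, Finset.filter_filter] at hsplit
      have e1 : Finset.filter (fun c => theta0 m c = ε ∧ phi m c s = theta0 m s)
          (univ : Finset (Vm m)) = Cbase := rfl
      have e2 : Finset.filter (fun c : Vm m => theta0 m c = ε ∧ ¬ phi m c s = theta0 m s)
          (univ : Finset (Vm m)) = Afin := by
        apply Finset.filter_congr
        intro c _
        rw [zne (phi m c s) (theta0 m s)]
        tauto
      rw [e1, e2] at hsplit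
      exact hsplit
    have hA4 : 4 * Afin.card = 2^(m + m) := by
      -- first: 2 * Afin.card = (filter P).card with P c := phi m c s = theta0 m s + 1
      have h1 := half_card_filter (fun c : Vm m => phi m c s = theta0 m s + 1)
        (theta0 m) (fun c => c + s)
        (fun c => by simp [add_assoc, pi_add_self s])
        (fun c hc => by
          show phi m (c + s) s = theta0 m s + 1
          rw [phi_add_left, phi_self, add_zero]
          exact hc)
        (fun c hc => by
          show theta0 m (c + s) = theta0 m c + 1
          rw [theta0_add, hc]
          have : ∀ x t : ZMod 2, x + t + (t + 1) = x + 1 := by decide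
          exact this _ _) ε
      have e3 : (univ.filter (fun c : Vm m =>
          phi m c s = theta0 m s + 1 ∧ theta0 m c = ε)) = Afin := rfl
      rw [e3] at h1
      obtain ⟨c₀, hc₀⟩ := exists_phi_one s hs0
      have h2 := half_card_filter (fun _ : Vm m => True) (fun c => phi m c s)
        (fun c => c + c₀)
        (fun c => by simp [add_assoc, pi_add_self c₀])
        (fun _ _ => trivial)
        (fun c _ => by
          show phi m (c + c₀) s = phi m c s + 1
          rw [phi_add_left, hc₀]) (theta0 m s + 1)
      simp only [true_and, Finset.filter_true_of_mem (fun _ _ => trivial)] at h2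
      have hcard : (univ : Finset (Vm m)).card = 2^(m + m) := by
        rw [Finset.card_univ]
        simp [Fintype.card_fun]
      rw [hcard] at h2
      omega
    -- the total count
    have hN := Vcount m (by omega) ε
    -- arithmetic
    have hj2 : (2:ℕ) ≤ 2^(m-2) := by
      have : (2:ℕ)^1 ≤ 2^(m-2) := Nat.pow_le_pow_right (by norm_num) (by omega)
      simpa using this
    set j : ℕ := 2^(m-2) with hj
    have hm1 : (2:ℕ)^(m-1) = 2 * j := by
      rw [hj, ← pow_succ']
      congr 1
      omega
    have hm0 : (2:ℕ)^m = 4 * j := by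
      rw [hj, show (4:ℕ) = 2^2 by norm_num, ← pow_add]
      congr 1
      omega
    set p : ℕ := j * j with hp
    have hmm : (2:ℕ)^(m + m) = 16 * p := by
      rw [pow_add, hm0, hp]
      ring
    have hProd : ((2:ℕ)^m - 1) * 2^(m-1) = 8*p - 2*j := by
      rw [hm0, hm1, Nat.sub_mul, one_mul]
      have h8 : 4*j*(2*j) = 8*p := by rw [hp]; ring
      rw [h8]
    have hple : 2 * j ≤ p := by
      rw [hp]
      calc 2 * j ≤ j * j := Nat.mul_le_mul_right j hj2
        _ = j * j := rfl
    rw [hmm] at hA4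
    rw [hProd] at hN
    by_cases hε : ε = 0
    · rw [if_pos hε] at hN ⊢
      rw [hm0] at hN
      have hkey : j * (2^(m-1) + 1) = 2*p + j := by
        rw [hm1, hp]
        ring
      rw [hkey]
      omega
    · rw [if_neg hε] at hN ⊢
      have hkey : j * (2^(m-1) - 1) = 2*p - j := by
        rw [hm1, mul_comm j (2*j-1), Nat.sub_mul, one_mul]
        have h2 : 2*j*j = 2*p := by rw [hp]; ring
        rw [h2]
      rw [hkey]
      omega
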